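/- For every integer y ≥ 3, f(y² − 1) ≤ y² − y − 1. -/
import Mathlib


/-- Fuel-based helper for the recursive function `f`. For `k ≤ fuel`, `faux fuel k`
computes the value of `f k`. -/
def faux : ℕ → ℕ → ℕ
  | 0, _ => 1
  | fuel + 1, k =>
    if k ≤ 2 then 1
    else if k ≤ 4 then 2
    else
      min (faux fuel (k - 1) + 1)
        (((List.range k).filter (fun k1 => 3 ≤ k1 ∧ k1 ∣ k)).foldr
          (fun k1 acc => min (k - k1 - k / k1 + 1 + max (faux fuel k1) (k / k1)) acc)
          (faux fuel (k - 1) + 1))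

/-- `f 1 = 1`, `f 2 = 1`, `f 3 = 2`, `f 4 = 2`, and for `k > 4`,
`f k = min (f (k-1) + 1)
          (min over factorizations k = k₁·k₂ with 3 ≤ k₁ < k, 2 ≤ k₂ of
             k₁·k₂ - k₁ - k₂ + 1 + max (f k₁) k₂)`,
where the inner minimum is omitted when no such factorization exists.
(Note: for a divisor `k₁` of `k` with `3 ≤ k₁ < k`, the cofactor `k₂ = k / k₁`
automatically satisfies `k₂ ≥ 2`.) -/
def f (k : ℕ) : ℕ := faux k k

lemma faux_le (fuel k : ℕ) : faux fuel k ≤ max 2 (k - 2) := by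
  induction fuel generalizing k with
  | zero => simp [faux]
  | succ n ih =>
    rw [faux]
    split
    · omega
    · split
      · omega
      · refine le_trans (min_le_left _ _) ?_
        have := ih (k - 1)
        omega

lemma foldr_min_le (g : ℕ → ℕ) (l : List ℕ) (init a : ℕ) (h : a ∈ l) :
    l.foldr (fun x acc => min (g x) acc) init ≤ g a := by
  induction l with
  | nil => simp at h
  | cons b t ih =>
    simp only [List.foldr]
    rcases List.mem_cons.mp h with h | h
    · subst h; exact min_le_left _ _
    · exact le_trans (min_le_right _ _) (ih h)

/-- For every integer `y ≥ 3`, `f (y² - 1) ≤ y² - y - 1`. -/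
theorem stmt_4 (y : ℕ) (hy : 3 ≤ y) :
    f (y ^ 2 - 1) ≤ y ^ 2 - y - 1 := by
  obtain ⟨z, rfl⟩ : ∃ z, y = z + 3 := ⟨y - 3, by omega⟩
  have hsq : (z + 3) ^ 2 = z * z + 6 * z + 9 := by ring
  have hmul : (z + 4) * (z + 2) = z * z + 6 * z + 8 := by ring
  set k := (z + 3) ^ 2 - 1 with hk
  have hk' : k = (z + 4) * (z + 2) := by omega
  have hk8 : 8 ≤ k := by omega
  have hdvd : (z + 4) ∣ k := ⟨z + 2, hk'⟩
  have hdiv : k / (z + 4) = z + 2 := by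
    rw [hk', Nat.mul_div_cancel_left _ (by omega)]
  have hmem : z + 4 ∈ (List.range k).filter (fun k1 => 3 ≤ k1 ∧ k1 ∣ k) := by
    rw [List.mem_filter, List.mem_range]
    exact ⟨by omega, decide_eq_true ⟨by omega, hdvd⟩⟩
  have hstep : f k = faux ((k - 1) + 1) k := by
    rw [show k - 1 + 1 = k by omega]; rfl
  rw [hstep, faux, if_neg (by omega), if_neg (by omega)]
  refine le_trans (min_le_right _ _) ?_
  refine le_trans (foldr_min_le _ _ _ (z + 4) hmem) ?_
  rw [hdiv]
  have h1 := faux_le (k - 1) (z + 4)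
  omega
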